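/- (Spectral decomposition of the class block.) The characteristic polynomial of B factors as char(B) = char(V + G) · char(V)^{r−1}; in particular, the spectrum of B (with multiplicities) is the union of the spectrum of V + G and r − 1 copies of the spectrum of V. -/

import Mathlib

open Matrix Polynomial

noncomputable section

/-- The block matrix `B ∈ ℝ^{rn×rn}` whose `(i,j)` block equals `A i + δ_{ij} V`. -/
def blockB {r n : ℕ} (V : Matrix (Fin n) (Fin n) ℝ) (A : Fin r → Matrix (Fin n) (Fin n) ℝ) :
    Matrix (Fin r × Fin n) (Fin r × Fin n) ℝ :=
  Matrix.of fun p q => A p.1 p.2 q.2 + if p.1 = q.1 then V p.2 q.2 else 0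

/-- The aggregation matrix `1_rᵀ ⊗ I_n ∈ ℝ^{n×rn}`, i.e. the block row `(I_n, …, I_n)`. -/
def aggMat (r n : ℕ) : Matrix (Fin n) (Fin r × Fin n) ℝ :=
  Matrix.of fun a q => if a = q.2 then 1 else 0

lemma charpoly_conj_aux {k : Type*} [Fintype k] [DecidableEq k]
    (P Q B : Matrix k k ℝ) (hPQ : P * Q = 1) :
    (P * B * Q).charpoly = B.charpoly := by
  let f := (RingHom.mapMatrix (C : ℝ →+* ℝ[X]) : Matrix k k ℝ →+* Matrix k k ℝ[X])
  have h1 : charmatrix (P * B * Q) = f P * charmatrix B * f Q := by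
    show scalar k X - f (P * B * Q) = f P * (scalar k X - f B) * f Q
    rw [_root_.map_mul, _root_.map_mul, mul_sub, sub_mul]
    congr 1
    have hc : scalar k (X : ℝ[X]) * f P = f P * scalar k (X : ℝ[X]) :=
      (scalar_commute (X : ℝ[X]) (fun r' => Commute.all _ _) (f P)).eq
    rw [← hc, mul_assoc, ← _root_.map_mul, hPQ, _root_.map_one, mul_one]
  have h2 : (f P).det * (f Q).det = 1 := by
    rw [← det_mul, ← _root_.map_mul, hPQ, _root_.map_one, det_one]
  rw [Matrix.charpoly, Matrix.charpoly, h1, det_mul, det_mul,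
    mul_comm ((f P).det), mul_assoc, h2, mul_one]

/-- The row-summing elementary block matrix `E` (identity blocks at `(0, j)`, `j ≠ 0`). -/
def Emat (m n : ℕ) : Matrix (Fin (m+1) × Fin n) (Fin (m+1) × Fin n) ℝ :=
  Matrix.of fun p q => if p.1 = 0 ∧ ¬ q.1 = 0 ∧ p.2 = q.2 then 1 else 0

/-- The block lower-triangular matrix similar to `blockB`. -/
def Mmat {m n : ℕ} (V G : Matrix (Fin n) (Fin n) ℝ)
    (A : Fin (m+1) → Matrix (Fin n) (Fin n) ℝ) :
    Matrix (Fin (m+1) × Fin n) (Fin (m+1) × Fin n) ℝ :=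
  Matrix.of fun p q =>
    if q.1 = 0 then (if p.1 = 0 then (V + G) p.2 q.2 else A p.1 p.2 q.2)
    else (if p.1 = q.1 then V p.2 q.2 else 0)

lemma Emat_sq (m n : ℕ) : Emat m n * Emat m n = 0 := by
  ext p q
  rw [mul_apply]
  apply Finset.sum_eq_zero
  intro k _
  simp only [Emat, of_apply, Matrix.zero_apply]
  by_cases h : k.1 = 0 <;> simp [h]

lemma key_eq {m n : ℕ} (V G : Matrix (Fin n) (Fin n) ℝ)
    (A : Fin (m+1) → Matrix (Fin n) (Fin n) ℝ) (hG : G = ∑ i, A i) :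
    (1 + Emat m n) * blockB V A = Mmat V G A * (1 + Emat m n) := by
  ext ⟨pi, pj⟩ ⟨qi, qj⟩
  rw [add_mul, one_mul, mul_add, mul_one, Matrix.add_apply, Matrix.add_apply, mul_apply, mul_apply]
  simp only [Fintype.sum_prod_type]
  have hEB : ∑ i : Fin (m+1), ∑ j : Fin n,
      Emat m n (pi, pj) (i, j) * blockB V A (i, j) (qi, qj)
      = if pi = 0 then (∑ i : Fin (m+1), blockB V A (i, pj) (qi, qj))
          - blockB V A (0, pj) (qi, qj) else 0 := by
    by_cases hp : pi = 0
    · subst hp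
      simp only [if_pos rfl]
      have : ∀ i : Fin (m+1), ∑ j : Fin n,
          Emat m n (0, pj) (i, j) * blockB V A (i, j) (qi, qj)
          = blockB V A (i, pj) (qi, qj) - (if i = 0 then blockB V A (0, pj) (qi, qj) else 0) := by
        intro i
        by_cases hi : i = 0
        · subst hi; simp [Emat]
        · have hterm : ∀ j, Emat m n (0, pj) (i, j) * blockB V A (i, j) (qi, qj)
              = if pj = j then blockB V A (i, j) (qi, qj) else 0 := by
            intro j
            simp [Emat, hi, ite_mul]
          rw [Finset.sum_congr rfl (fun j _ => hterm j), Finset.sum_ite_eq Finset.univ pj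
            (fun j => blockB V A (i, j) (qi, qj))]
          simp [hi]
      rw [Finset.sum_congr rfl (fun i _ => this i), Finset.sum_sub_distrib,
        Finset.sum_ite_eq' Finset.univ (0 : Fin (m+1)) (fun _ => blockB V A (0, pj) (qi, qj))]
      simp
    · simp only [if_neg hp]
      apply Finset.sum_eq_zero; intro i _
      apply Finset.sum_eq_zero; intro j _
      simp [Emat, hp]
  have hME : ∑ i : Fin (m+1), ∑ j : Fin n,
      Mmat V G A (pi, pj) (i, j) * Emat m n (i, j) (qi, qj)
      = if qi = 0 then 0 else Mmat V G A (pi, pj) (0, qj) := by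
    by_cases hq : qi = 0
    · simp only [if_pos hq]
      apply Finset.sum_eq_zero; intro i _
      apply Finset.sum_eq_zero; intro j _
      simp [Emat, hq]
    · simp only [if_neg hq]
      have : ∀ i : Fin (m+1), ∑ j : Fin n,
          Mmat V G A (pi, pj) (i, j) * Emat m n (i, j) (qi, qj)
          = if i = 0 then Mmat V G A (pi, pj) (0, qj) else 0 := by
        intro i
        by_cases hi : i = 0
        · subst hi
          simp only [if_pos rfl]
          rw [Finset.sum_congr rfl (fun j _ => ?_),
            Finset.sum_ite_eq' Finset.univ qj (fun j => Mmat V G A (pi, pj) (0, j))]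
          · simp
          · simp only [Emat, of_apply, hq, not_false_iff, true_and]
            split_ifs <;> simp_all
        · simp only [if_neg hi]
          apply Finset.sum_eq_zero; intro j _
          simp [Emat, hi]
      rw [Finset.sum_congr rfl (fun i _ => this i),
        Finset.sum_ite_eq' Finset.univ (0 : Fin (m+1)) (fun _ => Mmat V G A (pi, pj) (0, qj))]
      simp
  rw [hEB, hME]
  have hsum : (∑ i : Fin (m+1), blockB V A (i, pj) (qi, qj)) = G pj qj + V pj qj := by
    simp only [blockB, of_apply]
    rw [Finset.sum_add_distrib, Finset.sum_ite_eq' Finset.univ qi (fun _ => V pj qj)]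
    rw [hG]
    simp [Matrix.sum_apply]
  rcases eq_or_ne pi 0 with hp | hp <;> rcases eq_or_ne qi 0 with hq | hq
  · subst hp; subst hq
    rw [if_pos rfl, if_pos rfl, hsum]
    simp [blockB, Mmat, Matrix.add_apply]
    ring
  · subst hp
    rw [if_pos rfl, if_neg hq, hsum]
    simp [blockB, Mmat, Matrix.add_apply, hq, Ne.symm hq]
    ring
  · subst hq
    rw [if_neg hp, if_pos rfl]
    simp [blockB, Mmat, hp]
  · rw [if_neg hp, if_neg hq]
    simp [blockB, Mmat, hp, hq]
    ring

lemma inv_aux (m n : ℕ) : (1 - Emat m n) * (1 + Emat m n) = 1 := by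
  rw [sub_mul, one_mul, mul_add, mul_one, Emat_sq m n]
  abel

lemma charpoly_blockB_eq_Mmat {m n : ℕ} (V G : Matrix (Fin n) (Fin n) ℝ)
    (A : Fin (m+1) → Matrix (Fin n) (Fin n) ℝ) (hG : G = ∑ i, A i) :
    (blockB V A).charpoly = (Mmat V G A).charpoly := by
  have hB : (1 - Emat m n) * Mmat V G A * (1 + Emat m n) = blockB V A := by
    rw [mul_assoc, ← key_eq V G A hG, ← mul_assoc, inv_aux, one_mul]
  rw [← hB]
  exact charpoly_conj_aux _ _ _ (inv_aux m n)

lemma charpoly_empty {k : Type*} [Fintype k] [DecidableEq k] [IsEmpty k]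
    (M : Matrix k k ℝ) : M.charpoly = 1 := by
  rw [Matrix.charpoly, det_isEmpty]

lemma charpoly_Mmat {m n : ℕ} (V G : Matrix (Fin n) (Fin n) ℝ)
    (A : Fin (m+1) → Matrix (Fin n) (Fin n) ℝ) :
    (Mmat V G A).charpoly = (V + G).charpoly * V.charpoly ^ m := by
  rcases Nat.eq_zero_or_pos n with hn | hn
  · subst hn
    rw [charpoly_empty, charpoly_empty, charpoly_empty, one_pow, one_mul]
  set b : Fin (m+1) × Fin n → (Fin (m+1))ᵒᵈ := fun p => OrderDual.toDual p.1 with hb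
  have ht : (Mmat V G A).BlockTriangular b := by
    intro p q h
    have h' : p.1 < q.1 := h
    have hq : q.1 ≠ 0 := by
      intro h0
      exact absurd (h0 ▸ h') (by simp [Fin.le_zero_iff])
    simp [Mmat, hq, h'.ne]
  rw [ht.charpoly]
  have himg : Finset.image b Finset.univ = Finset.univ := by
    apply Finset.eq_univ_iff_forall.mpr
    intro a
    exact Finset.mem_image.mpr ⟨(OrderDual.ofDual a, ⟨0, hn⟩), Finset.mem_univ _, rfl⟩
  rw [himg]
  have hblock : ∀ a : (Fin (m+1))ᵒᵈ, ((Mmat V G A).toSquareBlock b a).charpoly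
      = (if OrderDual.ofDual a = 0 then V + G else V).charpoly := by
    intro a
    let e : {p : Fin (m+1) × Fin n // b p = a} ≃ Fin n :=
      { toFun := fun p => p.1.2
        invFun := fun j => ⟨(OrderDual.ofDual a, j), rfl⟩
        left_inv := by
          rintro ⟨⟨p1, p2⟩, hp⟩
          have : p1 = OrderDual.ofDual a := hp
          subst this
          rfl
        right_inv := fun j => rfl }
    have heq : (Mmat V G A).toSquareBlock b a
        = reindex e.symm e.symm (if OrderDual.ofDual a = 0 then V + G else V) := by
      ext p q
      have hp1 : p.1.1 = OrderDual.ofDual a := p.2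
      have hq1 : q.1.1 = OrderDual.ofDual a := q.2
      simp only [Matrix.toSquareBlock_def, reindex_apply, submatrix_apply, Mmat, of_apply]
      show _ = (if OrderDual.ofDual a = 0 then V + G else V) p.1.2 q.1.2
      by_cases h0 : OrderDual.ofDual a = 0
      · rw [if_pos h0, if_pos (hq1.trans h0), if_pos (hp1.trans h0)]
      · have hq0 : ¬ q.1.1 = 0 := fun h => h0 (hq1 ▸ h)
        rw [if_neg h0, if_neg hq0, if_pos (hp1.trans hq1.symm)]
    rw [heq, Matrix.charpoly_reindex]
  rw [Finset.prod_congr rfl (fun a _ => hblock a)]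
  rw [← Fintype.prod_equiv (OrderDual.toDual : Fin (m+1) ≃ (Fin (m+1))ᵒᵈ)
    (fun a => (if a = 0 then V + G else V).charpoly)
    (fun a => (if OrderDual.ofDual a = 0 then V + G else V).charpoly) (fun a => rfl)]
  rw [← Finset.mul_prod_erase Finset.univ _ (Finset.mem_univ (0 : Fin (m+1)))]
  rw [if_pos rfl]
  congr 1
  rw [Finset.prod_congr rfl (fun a ha => by rw [if_neg (Finset.ne_of_mem_erase ha)]),
    Finset.prod_const, Finset.card_erase_of_mem (Finset.mem_univ _), Finset.card_univ,
    Fintype.card_fin, Nat.add_sub_cancel]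


theorem stmt10_charpoly_block {r n : ℕ} (hr : 1 ≤ r)
    (V : Matrix (Fin n) (Fin n) ℝ) (A : Fin r → Matrix (Fin n) (Fin n) ℝ)
    (G : Matrix (Fin n) (Fin n) ℝ) (hG : G = ∑ i, A i) :
    (blockB V A).charpoly = (V + G).charpoly * V.charpoly ^ (r - 1) := by
  obtain ⟨m, rfl⟩ : ∃ m, r = m + 1 := ⟨r - 1, (Nat.succ_pred_eq_of_pos hr).symm⟩
  rw [charpoly_blockB_eq_Mmat V G A hG, charpoly_Mmat, Nat.add_sub_cancel]

end
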